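/- In U_τ(iso(2,1)), the coproduct Δ(C2)=1⊗C2+C2⊗e^{-τH}+2τD⊗e^{-τH}K is coassociative: (Δ⊗id)(Δ(C2)) = (id⊗Δ)(Δ(C2)), given Δ(H)=1⊗H+H⊗1, Δ(D)=1⊗D+D⊗e^{-τH}, Δ(K)=1⊗K+K⊗1. -/

import Mathlib

open scoped TensorProduct

/-- Coassociativity of Δ(C2) = 1⊗C2 + C2⊗e^{-τH} + 2τD⊗e^{-τH}K in U_τ(iso(2,1)).
We work in an associative ℝ-algebra A with generators H, D, K, C2 satisfying the
U_τ(iso(2,1)) relations (with the τ-divided one in multiplied form), Em playing the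
role of e^{-τH}, and Δ an algebra homomorphism with the stated values on the
generators and Δ(e^{-τH}) = e^{-τH}⊗e^{-τH}.  Then
(Δ⊗id)(Δ(C2)) = (id⊗Δ)(Δ(C2)). -/
theorem Uiso21_coproduct_C2_coassociative
    (A : Type*) [Ring A] [Algebra ℝ A] (τ : ℝ)
    (H D K C2 Em : A)
    (hHEm : H * Em = Em * H)
    (hDH : τ • (D * H - H * D) = 1 - Em)
    (hKH : K * H - H * K = 0)
    (hKD : K * D - D * K = 0)
    (hDC2 : D * C2 - C2 * D = -C2)
    (hHC2 : H * C2 - C2 * H = (2 : ℝ) • (Em * K))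
    (Δ : A →ₐ[ℝ] A ⊗[ℝ] A)
    (hΔH : Δ H = 1 ⊗ₜ[ℝ] H + H ⊗ₜ[ℝ] 1)
    (hΔD : Δ D = 1 ⊗ₜ[ℝ] D + D ⊗ₜ[ℝ] Em)
    (hΔK : Δ K = 1 ⊗ₜ[ℝ] K + K ⊗ₜ[ℝ] 1)
    (hΔC2 : Δ C2 = 1 ⊗ₜ[ℝ] C2 + C2 ⊗ₜ[ℝ] Em + (2 * τ) • (D ⊗ₜ[ℝ] (Em * K)))
    (hΔEm : Δ Em = Em ⊗ₜ[ℝ] Em) :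
    (Algebra.TensorProduct.assoc ℝ ℝ ℝ A A A)
        ((Algebra.TensorProduct.map Δ (AlgHom.id ℝ A)) (Δ C2))
      = (Algebra.TensorProduct.map (AlgHom.id ℝ A) Δ) (Δ C2) := by
  rw [hΔC2]
  simp only [map_add, map_smul, Algebra.TensorProduct.map_tmul, AlgHom.id_apply,
    map_one, hΔC2, hΔD, hΔEm, map_mul, hΔK, mul_add, Algebra.TensorProduct.one_def, Algebra.TensorProduct.tmul_mul_tmul,
    one_mul, mul_one, TensorProduct.add_tmul, TensorProduct.tmul_add,
    Algebra.TensorProduct.assoc_tmul, TensorProduct.smul_tmul', TensorProduct.tmul_smul, smul_add]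
  have h : ((2*τ:ℝ) • (1:A)) ⊗ₜ[ℝ] (D ⊗ₜ[ℝ] (Em*K)) = (1:A) ⊗ₜ[ℝ] (((2*τ:ℝ) • D) ⊗ₜ[ℝ] (Em*K)) := by
    rw [TensorProduct.smul_tmul, TensorProduct.smul_tmul']
  rw [h]
  abel
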